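/- (Potential decrease for proximal gradient descent) Let f be convex and L-smooth, g proper closed convex, φ = f + g with minimum value φ̄ attained. Fix 0 < η ≤ 1 and let x^{k+1} = x^k − (η/L)G(x^k, η/L). Then the potential C_k := (η/L)·k·‖G(x^k, η/L)‖² + φ(x^k) − φ̄ satisfies C_{k+1} ≤ C_k for all k ≥ 0. -/

import Mathlib

open scoped RealInnerProductSpace

section Aux
variable {E : Type*} [NormedAddCommGroup E] [InnerProductSpace ℝ E] [CompleteSpace E]

lemma pdpg_dirDeriv (f : E → ℝ) (f' : E → E) (hdiff : ∀ x, HasGradientAt f (f' x) x)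
    (y v : E) (s : ℝ) :
    HasDerivAt (fun r : ℝ => f (y + r • v)) ⟪f' (y + s • v), v⟫ s := by
  have hline : HasDerivAt (fun r : ℝ => y + r • v) v s := by
    simpa using ((hasDerivAt_id s).smul_const v).const_add y
  have h := (hasGradientAt_iff_hasFDerivAt.mp (hdiff (y + s • v))).comp_hasDerivAt s hline
  simpa [Function.comp_def] using h

lemma pdpg_convex_lower (f : E → ℝ) (f' : E → E) (hdiff : ∀ x, HasGradientAt f (f' x) x)
    (hconv : ConvexOn ℝ Set.univ f) (y z : E) :
    f y + ⟪f' y, z - y⟫ ≤ f z := by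
  set v := z - y with hv
  set ψ : ℝ → ℝ := fun r => f (y + r • v) with hψ
  have hψ0 : HasDerivAt ψ ⟪f' y, v⟫ 0 := by
    simpa using pdpg_dirDeriv f f' hdiff y v 0
  have hslope : Filter.Tendsto (slope ψ 0) (nhdsWithin 0 (Set.Ioi 0)) (nhds ⟪f' y, v⟫) :=
    (hasDerivAt_iff_tendsto_slope.mp hψ0).mono_left
      (nhdsWithin_mono 0 (fun r hr => ne_of_gt hr))
  have hbound : ∀ r ∈ Set.Ioo (0:ℝ) 1, slope ψ 0 r ≤ ψ 1 - ψ 0 := by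
    intro r hr
    have hc := hconv.2 (Set.mem_univ y) (Set.mem_univ z) (by linarith [hr.2] : (0:ℝ) ≤ 1 - r)
      (le_of_lt hr.1) (by ring)
    have heq : (1 - r) • y + r • z = y + r • v := by rw [hv]; module
    have : ψ r ≤ (1 - r) * f y + r * f z := by
      rw [hψ]; simp only [← heq]; simpa [smul_eq_mul] using hc
    have hψ1 : ψ 1 = f z := by simp [hψ, hv]
    have hψz : ψ 0 = f y := by simp [hψ]
    rw [slope_def_field, sub_zero, div_le_iff₀ hr.1]
    nlinarith [hr.1]
  have hmem : Set.Ioo (0:ℝ) 1 ∈ nhdsWithin 0 (Set.Ioi 0) :=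
    Ioo_mem_nhdsGT_of_mem (by constructor <;> norm_num)
  have hle : ⟪f' y, v⟫ ≤ ψ 1 - ψ 0 :=
    le_of_tendsto hslope (Filter.eventually_of_mem hmem hbound)
  have hψ1 : ψ 1 = f z := by simp [hψ, hv]
  have hψz : ψ 0 = f y := by simp [hψ]
  rw [hψ1, hψz] at hle; linarith

lemma pdpg_upper (f : E → ℝ) (f' : E → E) (L : ℝ)
    (hdiff : ∀ x, HasGradientAt f (f' x) x)
    (hlip : ∀ x y, ‖f' x - f' y‖ ≤ L * ‖x - y‖) (y z : E) :
    f z ≤ f y + ⟪f' y, z - y⟫ + L / 2 * ‖z - y‖ ^ 2 := by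
  set v := z - y with hv
  set χ : ℝ → ℝ := fun r => f (y + r • v) - r * ⟪f' y, v⟫ - L / 2 * ‖v‖ ^ 2 * r ^ 2 with hχ
  have hχ' : ∀ r : ℝ, HasDerivAt χ
      (⟪f' (y + r • v), v⟫ - ⟪f' y, v⟫ - L * ‖v‖ ^ 2 * r) r := by
    intro r
    have h1 : HasDerivAt (fun r : ℝ => f (y + r • v)) ⟪f' (y + r • v), v⟫ r :=
      pdpg_dirDeriv f f' hdiff y v r
    have h2 : HasDerivAt (fun r : ℝ => r * ⟪f' y, v⟫) ⟪f' y, v⟫ r :=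
      hasDerivAt_mul_const _
    have h3 : HasDerivAt (fun r : ℝ => L / 2 * ‖v‖ ^ 2 * r ^ 2)
        (L / 2 * ‖v‖ ^ 2 * (2 * r)) r := by
      simpa using (hasDerivAt_pow 2 r).const_mul (L / 2 * ‖v‖ ^ 2)
    have := (h1.sub h2).sub h3
    convert this using 1
    · rfl
    · rfl
    · rfl
    · ring
  have hanti : AntitoneOn χ (Set.Icc 0 1) := by
    apply antitoneOn_of_deriv_nonpos (convex_Icc 0 1)
    · exact (Continuous.continuousOn (by
        rw [continuous_iff_continuousAt]
        exact fun r => (hχ' r).differentiableAt.continuousAt))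
    · exact fun r _ => (hχ' r).differentiableAt.differentiableWithinAt
    · intro r hr
      rw [interior_Icc] at hr
      rw [(hχ' r).deriv]
      have hlb := hlip (y + r • v) y
      have h1 : ⟪f' (y + r • v) - f' y, v⟫ ≤ ‖f' (y + r • v) - f' y‖ * ‖v‖ :=
        real_inner_le_norm _ _
      have h2 : ‖y + r • v - y‖ = r * ‖v‖ := by
        rw [add_sub_cancel_left, norm_smul, Real.norm_eq_abs, abs_of_pos hr.1]
      rw [h2] at hlb
      rw [inner_sub_left] at h1
      nlinarith [norm_nonneg v, norm_nonneg (f' (y + r • v) - f' y), hr.1.le]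
  have h01 := hanti (Set.mem_Icc.mpr ⟨le_refl 0, zero_le_one⟩)
    (Set.mem_Icc.mpr ⟨zero_le_one, le_refl 1⟩) zero_le_one
  have hχ0 : χ 0 = f y := by simp [hχ]
  have hχ1 : χ 1 = f z - ⟪f' y, v⟫ - L / 2 * ‖v‖ ^ 2 := by simp [hχ, hv]
  rw [hχ0, hχ1] at h01
  linarith

lemma pdpg_prox_subgrad (g : E → ℝ) (hg : ConvexOn ℝ Set.univ g) {t : ℝ} (ht : 0 < t)
    (y p : E) (hp : IsMinOn (fun z => g z + 1 / (2 * t) * ‖z - y‖ ^ 2) Set.univ p) (z : E) :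
    g p + ⟪t⁻¹ • (y - p), z - p⟫ ≤ g z := by
  apply le_of_forall_pos_le_add
  intro ε hε
  set K : ℝ := 1 / (2 * t) * ‖z - p‖ ^ 2 with hK
  have hK0 : 0 ≤ K := by positivity
  set l : ℝ := min 1 (ε / (K + 1)) with hl
  have hl0 : 0 < l := lt_min zero_lt_one (by positivity)
  have hl1 : l ≤ 1 := min_le_left _ _
  have hmin := hp (Set.mem_univ (p + l • (z - p)))
  simp only [Set.mem_setOf_eq] at hmin
  have hgc : g (p + l • (z - p)) ≤ (1 - l) * g p + l * g z := by
    have hc := hg.2 (Set.mem_univ p) (Set.mem_univ z) (by linarith : (0:ℝ) ≤ 1 - l)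
      hl0.le (by ring)
    have heq : (1 - l) • p + l • z = p + l • (z - p) := by module
    rw [heq] at hc; simpa [smul_eq_mul] using hc
  have hnorm : ‖p + l • (z - p) - y‖ ^ 2
      = ‖p - y‖ ^ 2 + 2 * (l * ⟪p - y, z - p⟫) + l ^ 2 * ‖z - p‖ ^ 2 := by
    have : p + l • (z - p) - y = (p - y) + l • (z - p) := by abel
    rw [this, norm_add_sq_real, real_inner_smul_right, norm_smul, Real.norm_eq_abs,
      mul_pow, sq_abs]
  have hkey : 0 ≤ l * ((g z - g p) + t⁻¹ * ⟪p - y, z - p⟫ + l * K) := by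
    rw [hnorm] at hmin
    have hti : t⁻¹ = 2 * (1 / (2 * t)) := by field_simp
    rw [hK, hti]
    nlinarith [hmin, hgc]
  have hfac : 0 ≤ (g z - g p) + t⁻¹ * ⟪p - y, z - p⟫ + l * K :=
    nonneg_of_mul_nonneg_right hkey hl0
  have hlK : l * K ≤ ε := by
    have hle : l ≤ ε / (K + 1) := min_le_right _ _
    have h1 : l * K ≤ ε / (K + 1) * K := by nlinarith
    have h2 : ε / (K + 1) * K ≤ ε := by
      rw [div_mul_eq_mul_div, div_le_iff₀ (by positivity)]
      nlinarith
    linarith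
  have hip : ⟪t⁻¹ • (y - p), z - p⟫ = - (t⁻¹ * ⟪p - y, z - p⟫) := by
    rw [real_inner_smul_left]
    have h : (y - p) = -(p - y) := by abel
    rw [h, inner_neg_left]; ring
  rw [hip]; linarith

/-- Interpolation inequality for smooth convex functions. -/
lemma pdpg_interp (f : E → ℝ) (f' : E → E) (L : ℝ) (hL : 0 < L)
    (hdiff : ∀ x, HasGradientAt f (f' x) x) (hconv : ConvexOn ℝ Set.univ f)
    (hlip : ∀ x y, ‖f' x - f' y‖ ≤ L * ‖x - y‖) (a p : E) :
    f p + ⟪f' p, a - p⟫ + 1 / (2 * L) * ‖f' a - f' p‖ ^ 2 ≤ f a := by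
  set d := f' a - f' p with hd
  set z := a - L⁻¹ • d with hz
  have h1 := pdpg_convex_lower f f' hdiff hconv p z
  have h2 := pdpg_upper f f' L hdiff hlip a z
  have hzp : z - p = (a - p) - L⁻¹ • d := by rw [hz]; abel
  have hza : z - a = -(L⁻¹ • d) := by rw [hz]; abel
  rw [hzp, inner_sub_right, real_inner_smul_right] at h1
  rw [hza, inner_neg_right, real_inner_smul_right, norm_neg, norm_smul, Real.norm_eq_abs,
    abs_of_pos (inv_pos.mpr hL)] at h2
  have hdd : ⟪f' a, d⟫ - ⟪f' p, d⟫ = ‖d‖ ^ 2 := by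
    rw [← inner_sub_left, ← hd, real_inner_self_eq_norm_sq]
  have harith : L / 2 * (L⁻¹ * ‖d‖) ^ 2 = 1 / (2 * L) * ‖d‖ ^ 2 := by
    field_simp
  rw [harith] at h2
  have hLi : L⁻¹ * ‖d‖ ^ 2 = 2 * (1 / (2 * L) * ‖d‖ ^ 2) := by field_simp
  have hdd2 : L⁻¹ * ⟪f' a, d⟫ - L⁻¹ * ⟪f' p, d⟫ = L⁻¹ * ‖d‖ ^ 2 := by
    rw [← mul_sub, hdd]
  linarith [h1, h2, hdd2, hLi]
end Aux

set_option maxHeartbeats 1600000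

/-- **Potential decrease for proximal gradient descent.** For step `t = η/L`, `0 < η ≤ 1`,
iterates `x^{k+1} = x^k - t G(x^k,t)` (i.e. `x^{k+1} = prox_{tg}(x^k - t∇f x^k)`), the potential
`C_k = t k ‖G(x^k,t)‖² + φ(x^k) - φ̄` is nonincreasing. -/
theorem potential_decrease_prox_grad
    {E : Type*} [NormedAddCommGroup E] [InnerProductSpace ℝ E] [FiniteDimensional ℝ E]
    (f : E → ℝ) (f' : E → E) (g : E → ℝ) (L : ℝ) (hL : 0 < L)
    (hdiff : ∀ x, HasGradientAt f (f' x) x)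
    (hconv : ConvexOn ℝ Set.univ f)
    (hlip : ∀ x y, ‖f' x - f' y‖ ≤ L * ‖x - y‖)
    (hg : ConvexOn ℝ Set.univ g)
    (η : ℝ) (hη : 0 < η) (hη1 : η ≤ 1) (prox : E → E)
    (hprox : ∀ y : E, IsMinOn
      (fun z => g z + (1 / (2 * (η / L))) * ‖z - y‖ ^ 2) Set.univ (prox y))
    (xstar : E) (hmin : IsMinOn (fun z => f z + g z) Set.univ xstar)
    (x : ℕ → E)
    (hx : ∀ k, x (k + 1) =
      x k - (η / L) • ((L / η) • (x k - prox (x k - (η / L) • f' (x k))))) :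
    ∀ k : ℕ,
      (η / L) * (k + 1) * ‖(L / η) • (x (k + 1) - prox (x (k + 1) - (η / L) • f' (x (k + 1))))‖ ^ 2
          + (f (x (k + 1)) + g (x (k + 1))) - (f xstar + g xstar)
        ≤ (η / L) * k * ‖(L / η) • (x k - prox (x k - (η / L) • f' (x k)))‖ ^ 2
          + (f (x k) + g (x k)) - (f xstar + g xstar) := by
  intro k
  have ht : 0 < η / L := by positivity
  set t := η / L with htdef
  have hs' : L / η = t⁻¹ := by rw [htdef, inv_div]
  rw [hs']
  have htne : t ≠ 0 := ne_of_gt ht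
  set a := x k with ha
  -- the next iterate is the prox point
  have hp1 : x (k + 1) = prox (a - t • f' a) := by
    rw [hx k, hs', smul_inv_smul₀ htne, ← ha]
    abel
  rw [hp1]
  set p := prox (a - t • f' a) with hpdef
  set q := prox (p - t • f' p) with hqdef
  set G := t⁻¹ • (a - p) with hG
  set G' := t⁻¹ • (p - q) with hG'
  have hap : a - p = t • G := by rw [hG, smul_inv_smul₀ htne]
  have hpq : p - q = t • G' := by rw [hG', smul_inv_smul₀ htne]
  -- subgradient inequalities from prox
  have hu : ∀ z, g p + ⟪G - f' a, z - p⟫ ≤ g z := by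
    intro z
    have h := pdpg_prox_subgrad g hg ht (a - t • f' a) p (hprox (a - t • f' a)) z
    have he : t⁻¹ • (a - t • f' a - p) = G - f' a := by
      have h2 : a - t • f' a - p = (a - p) - t • f' a := by abel
      rw [h2, smul_sub, inv_smul_smul₀ htne, ← hG]
    rwa [he] at h
  have hq : ∀ z, g q + ⟪G' - f' p, z - q⟫ ≤ g z := by
    intro z
    have h := pdpg_prox_subgrad g hg ht (p - t • f' p) q (hprox (p - t • f' p)) z
    have he : t⁻¹ • (p - t • f' p - q) = G' - f' p := by
      have h2 : p - t • f' p - q = (p - q) - t • f' p := by abel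
      rw [h2, smul_sub, inv_smul_smul₀ htne, ← hG']
    rwa [he] at h
  set d := f' a - f' p with hd
  set A := G - d with hA
  -- (i) ‖G'‖ ≤ ‖A‖
  have hGA : ‖G'‖ ^ 2 ≤ ‖A‖ ^ 2 := by
    have h1 := hq p
    have h2 := hu q
    have e1 : ⟪G' - f' p, p - q⟫ = t * (‖G'‖ ^ 2 - ⟪f' p, G'⟫) := by
      rw [hpq, real_inner_smul_right, inner_sub_left, real_inner_self_eq_norm_sq]
    have e2 : ⟪G - f' a, q - p⟫ = -(t * ⟪G - f' a, G'⟫) := by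
      have : q - p = -(p - q) := by abel
      rw [this, inner_neg_right, hpq, real_inner_smul_right]
    rw [e1] at h1; rw [e2] at h2
    have key : ‖G'‖ ^ 2 ≤ ⟪f' p, G'⟫ + ⟪G - f' a, G'⟫ := by
      have h3 : t * (‖G'‖ ^ 2 - ⟪f' p, G'⟫) - t * ⟪G - f' a, G'⟫ ≤ 0 := by linarith
      nlinarith [h3, ht]
    have hAe : (f' p) + (G - f' a) = A := by rw [hA, hd]; abel
    have key2 : ‖G'‖ ^ 2 ≤ ⟪A, G'⟫ := by
      rw [← hAe, inner_add_left]; exact key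
    have := real_inner_le_norm A G'
    nlinarith [norm_nonneg G', norm_nonneg A]
  -- cocoercivity: ‖d‖² ≤ ⟪d, G⟫
  have hdG : ‖d‖ ^ 2 ≤ ⟪d, G⟫ := by
    have i1 := pdpg_interp f f' L hL hdiff hconv hlip a p
    have i2 := pdpg_interp f f' L hL hdiff hconv hlip p a
    have e1 : ⟪f' a, p - a⟫ = -⟪f' a, a - p⟫ := by
      have : p - a = -(a - p) := by abel
      rw [this, inner_neg_right]
    have e2 : ‖f' p - f' a‖ = ‖d‖ := by rw [hd, norm_sub_rev]
    rw [e1, e2] at i2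
    have e3 : ⟪f' a, a - p⟫ - ⟪f' p, a - p⟫ = ⟪d, a - p⟫ := by
      rw [hd, inner_sub_left]
    have hsum : L⁻¹ * ‖d‖ ^ 2 ≤ ⟪d, a - p⟫ := by
      have hLi : L⁻¹ * ‖d‖ ^ 2 = 2 * (1 / (2 * L) * ‖d‖ ^ 2) := by field_simp
      rw [← hd] at i1
      linarith [i1, i2, e3, hLi]
    have e4 : ⟪d, a - p⟫ = t * ⟪d, G⟫ := by rw [hap, real_inner_smul_right]
    rw [e4] at hsum
    have htL : t * L = η := by rw [htdef]; field_simp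
    have h5 : ‖d‖ ^ 2 ≤ η * ⟪d, G⟫ := by
      have := mul_le_mul_of_nonneg_left hsum hL.le
      have hLL : L * (L⁻¹ * ‖d‖ ^ 2) = ‖d‖ ^ 2 := by field_simp
      nlinarith [htL]
    have hI0 : 0 ≤ ⟪d, G⟫ := by
      have h0 : 0 ≤ η * ⟪d, G⟫ := le_trans (by positivity) h5
      exact nonneg_of_mul_nonneg_right h0 hη
    nlinarith [mul_nonneg (by linarith : (0:ℝ) ≤ 1 - η) hI0]
  -- descent inequality
  have hdesc : t * (‖G‖ ^ 2 - ⟪d, G⟫) + 1 / (2 * L) * ‖d‖ ^ 2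
      ≤ (f a + g a) - (f p + g p) := by
    have i1 := pdpg_interp f f' L hL hdiff hconv hlip a p
    rw [← hd] at i1
    have h2 := hu a
    have e1 : ⟪f' p, a - p⟫ + ⟪G - f' a, a - p⟫ = ⟪A, a - p⟫ := by
      rw [← inner_add_left]
      congr 1
      rw [hA, hd]; abel
    have e2 : ⟪A, a - p⟫ = t * (‖G‖ ^ 2 - ⟪d, G⟫) := by
      rw [hap, real_inner_smul_right, hA, inner_sub_left, real_inner_self_eq_norm_sq]
    linarith [i1, h2, e1, e2]
  -- norm expansion
  have hA2 : ‖A‖ ^ 2 = ‖G‖ ^ 2 - 2 * ⟪d, G⟫ + ‖d‖ ^ 2 := by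
    rw [hA, norm_sub_sq_real, real_inner_comm G d]
  -- final arithmetic
  have htL2 : t / 2 ≤ 1 / (2 * L) := by
    rw [div_le_div_iff₀ two_pos (by positivity), htdef]
    have he : η / L * (2 * L) = 2 * η := by field_simp
    linarith
  have hk0 : (0 : ℝ) ≤ (k : ℝ) := Nat.cast_nonneg k
  have hd0 : (0:ℝ) ≤ ‖d‖ ^ 2 := by positivity
  have hBA : ‖G'‖ ^ 2 ≤ ‖G‖ ^ 2 := by nlinarith
  have h1 : t * k * ‖G'‖ ^ 2 ≤ t * k * ‖G‖ ^ 2 :=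
    mul_le_mul_of_nonneg_left hBA (mul_nonneg ht.le hk0)
  have h2 : t * ‖G'‖ ^ 2 ≤ (f a + g a) - (f p + g p) := by
    nlinarith [mul_le_mul_of_nonneg_left hGA ht.le,
      mul_le_mul_of_nonneg_left hdG ht.le,
      mul_nonneg (sub_nonneg.mpr htL2) hd0]
  push_cast
  nlinarith [h1, h2]
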